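/- Let k be a field, V a finite-dimensional k-vector space, w ∈ ⋀^r V nonzero spanning a line L, and α : V → ⋀^{r+1} V the map v ↦ v ∧ w. If W ⊆ V is an r-dimensional subspace with ⋀^r W = L, then W = ker α. -/

import Mathlib

open ExteriorAlgebra

/-- Dual family of coordinates for a linearly independent family over a field. -/
lemma exists_dual_family {k V : Type*} [Field k] [AddCommGroup V] [Module k V]
    {n : ℕ} {v : Fin n → V} (hv : LinearIndependent k v) :
    ∃ g : V →ₗ[k] (Fin n → k), ∀ i j, g (v i) j = if j = i then 1 else 0 := by
  classical
  let b := hv.linearIndepOn_id.extend (Set.subset_univ _)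
  let B := Module.Basis.extend hv.linearIndepOn_id
  have hsub : Set.range v ⊆ hv.linearIndepOn_id.extend (Set.subset_univ _) :=
    hv.linearIndepOn_id.subset_extend _
  let idx : Fin n → hv.linearIndepOn_id.extend (Set.subset_univ _) :=
    fun i => ⟨v i, hsub ⟨i, rfl⟩⟩
  have hidx : Function.Injective idx := by
    intro i j hij
    exact hv.injective (congrArg Subtype.val hij)
  refine ⟨LinearMap.pi fun j => B.coord (idx j), fun i j => ?_⟩
  have hBv : ∀ i, B (idx i) = v i := fun i => Module.Basis.extend_apply_self _ _
  simp only [LinearMap.pi_apply, Module.Basis.coord_apply]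
  rw [← hBv i, Module.Basis.repr_self]
  by_cases h : j = i
  · subst h; simp
  · rw [Finsupp.single_apply, if_neg (fun hc => h (hidx hc).symm), if_neg h]

/-- The wedge of a linearly independent family over a field is nonzero. -/
lemma ιMulti_ne_zero_of_linearIndependent {k V : Type*} [Field k] [AddCommGroup V] [Module k V]
    {n : ℕ} {v : Fin n → V} (hv : LinearIndependent k v) :
    ExteriorAlgebra.ιMulti k n v ≠ 0 := by
  classical
  obtain ⟨g, hg⟩ := exists_dual_family hv
  let D : V [⋀^Fin n]→ₗ[k] k :=
    (Matrix.detRowAlternating (n := Fin n) (R := k)).compLinearMap g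
  let f : ∀ i, V [⋀^Fin i]→ₗ[k] k := Function.update (fun _ => 0) n D
  intro h
  have h0 : ExteriorAlgebra.liftAlternating (R := k) (M := V) f (ExteriorAlgebra.ιMulti k n v)
      = f n v := ExteriorAlgebra.liftAlternating_apply_ιMulti f v
  rw [h, map_zero] at h0
  have hfn : f n = D := Function.update_self _ _ _
  have hD : D v = 1 := by
    show Matrix.detRowAlternating (Matrix.of fun i => g (v i)) = 1
    have : (Matrix.of fun i => g (v i)) = (1 : Matrix (Fin n) (Fin n) k) := by
      ext i j
      rw [Matrix.of_apply, hg i j, Matrix.one_apply]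
      exact if_congr eq_comm rfl rfl
    rw [this]
    exact Matrix.det_one
  rw [hfn, hD] at h0
  exact one_ne_zero h0.symm

/-- If `x` lies in the span of a family, then `ι x` times the wedge of the family vanishes. -/
lemma ι_mul_prod_eq_zero_of_mem_span {k V : Type*} [Field k] [AddCommGroup V] [Module k V]
    {n : ℕ} (e : Fin n → V) {x : V} (hx : x ∈ Submodule.span k (Set.range e)) :
    ExteriorAlgebra.ι k x * (List.ofFn fun i => ExteriorAlgebra.ι k (e i)).prod = 0 := by
  let P := (List.ofFn fun i => ExteriorAlgebra.ι k (e i)).prod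
  let L : V →ₗ[k] ExteriorAlgebra k V :=
    (LinearMap.mulRight k P).comp (ExteriorAlgebra.ι k : V →ₗ[k] ExteriorAlgebra k V)
  have hL : Submodule.span k (Set.range e) ≤ LinearMap.ker L := by
    rw [Submodule.span_le]
    rintro _ ⟨i, rfl⟩
    exact ExteriorAlgebra.ι_mul_prod_list e i
  exact hL hx

theorem stmt_1 {k V : Type*} [Field k] [AddCommGroup V] [Module k V]
    [FiniteDimensional k V] (r : ℕ) (hr : 0 < r) (hrn : r ≤ Module.finrank k V)
    (w : ExteriorAlgebra k V) (hw : w ∈ ⋀[k]^r V) (hw0 : w ≠ 0)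
    (W : Submodule k V) (hWr : Module.finrank k W = r)
    (hWL : Submodule.span k {x : ExteriorAlgebra k V | ∃ v : Fin r → V,
        (∀ i, v i ∈ W) ∧
        x = (List.ofFn fun i => ExteriorAlgebra.ι k (v i)).prod}
      = Submodule.span k {w}) :
    W = LinearMap.ker ((LinearMap.mulRight k w).comp
      (ExteriorAlgebra.ι k : V →ₗ[k] ExteriorAlgebra k V)) := by
  classical
  -- basis of W
  let b : Module.Basis (Fin r) k W := (Module.finBasis k W).reindex (finCongr hWr)
  let e : Fin r → V := fun i => (b i : V)
  have he_mem : ∀ i, e i ∈ W := fun i => (b i).2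
  have he_li : LinearIndependent k e :=
    b.linearIndependent.map' W.subtype W.ker_subtype
  have he_span : Submodule.span k (Set.range e) = W := by
    have : Set.range e = W.subtype '' Set.range b := by
      rw [← Set.range_comp]; rfl
    rw [this, Submodule.span_image, b.span_eq, Submodule.map_top, Submodule.range_subtype]
  -- top wedge of the basis
  set E : ExteriorAlgebra k V := (List.ofFn fun i => ExteriorAlgebra.ι k (e i)).prod with hE
  have hE_ne : E ≠ 0 := by
    have := ιMulti_ne_zero_of_linearIndependent he_li
    rwa [ExteriorAlgebra.ιMulti_apply] at this
  have hE_mem : E ∈ Submodule.span k {w} := by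
    rw [← hWL]
    exact Submodule.subset_span ⟨e, he_mem, rfl⟩
  obtain ⟨c, hc⟩ := Submodule.mem_span_singleton.mp hE_mem
  have hc0 : c ≠ 0 := by
    rintro rfl; rw [zero_smul] at hc; exact hE_ne hc.symm
  have hwE : w = c⁻¹ • E := by
    rw [← hc, smul_smul, inv_mul_cancel₀ hc0, one_smul]
  apply le_antisymm
  · -- W ⊆ ker
    intro x hx
    rw [LinearMap.mem_ker, LinearMap.comp_apply, LinearMap.mulRight_apply, hwE, mul_smul_comm]
    rw [ι_mul_prod_eq_zero_of_mem_span e (he_span ▸ hx), smul_zero]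
  · -- ker ⊆ W
    intro x hx
    rw [LinearMap.mem_ker, LinearMap.comp_apply, LinearMap.mulRight_apply] at hx
    by_contra hxW
    have hli : LinearIndependent k (Fin.cons x e : Fin (r + 1) → V) :=
      he_li.fin_cons (by rwa [he_span])
    have hne := ιMulti_ne_zero_of_linearIndependent hli
    apply hne
    rw [ExteriorAlgebra.ιMulti_succ_apply]
    have ht : Matrix.vecTail (Fin.cons x e : Fin (r + 1) → V) = e := Matrix.tail_cons x e
    rw [ht, Fin.cons_zero, ExteriorAlgebra.ιMulti_apply]
    show ExteriorAlgebra.ι k x * E = 0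
    rw [← hc, mul_smul_comm, hx, smul_zero]
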